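/- For any probability measure μ on a finite set X and any partition of unity F, one has H_Hud[μ,F] ≤ S_q(ρ_Mak[μ,F]), where H_Hud[μ,F] = S(μ∘F) − Σ_x μ_x S(δ_x∘F) and (ρ_Mak[μ,F])_{kl} = Σ_x μ_x √(f_k(x)f_l(x)). -/

import Mathlib

noncomputable def eta (x : ℝ) : ℝ := -(x * Real.log x)

noncomputable def shannon {I : Type} [Fintype I] (p : I → ℝ) : ℝ := ∑ i, eta (p i)

/-- Von Neumann entropy of a real symmetric matrix via its eigenvalues. -/
noncomputable def vonNeumannR {K : Type} [Fintype K] [DecidableEq K]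
    {ρ : Matrix K K ℝ} (h : ρ.IsHermitian) : ℝ := ∑ k, eta (h.eigenvalues k)

lemma bil {J K : Type} [Fintype J] [Fintype K] [DecidableEq K] (e : J → K → ℝ)
    (hcomp : ∀ k l, ∑ j, e j k * e j l = if k = l then (1:ℝ) else 0)
    (u w : K → ℝ) :
    ∑ j, (∑ k, e j k * u k) * (∑ k, e j k * w k) = ∑ k, u k * w k := by
  have h1 : ∀ j, (∑ k, e j k * u k) * (∑ k, e j k * w k)
      = ∑ k, ∑ l, (u k * w l) * (e j k * e j l) := by
    intro j
    rw [Finset.sum_mul_sum]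
    exact Finset.sum_congr rfl fun k _ => Finset.sum_congr rfl fun l _ => by ring
  simp_rw [h1]
  rw [Finset.sum_comm]
  have h2 : ∀ k, ∑ j, ∑ l, (u k * w l) * (e j k * e j l) = u k * w k := by
    intro k
    rw [Finset.sum_comm]
    have h3 : ∀ l, ∑ j, (u k * w l) * (e j k * e j l) = (u k * w l) * (if k = l then (1:ℝ) else 0) := by
      intro l; rw [← Finset.mul_sum, hcomp]
    simp_rw [h3]
    simp [mul_ite]
  simp_rw [h2]

/-- pointwise resolvent comparison -/
lemma pointG {J K : Type} [Fintype J] [Fintype K] [DecidableEq K] (e : J → K → ℝ)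
    (hcomp : ∀ k l, ∑ j, e j k * e j l = if k = l then (1:ℝ) else 0)
    (lam : J → ℝ) (hlam : ∀ j, 0 < lam j)
    (B : K → ℝ) (hB : ∀ k, 0 < B k)
    (H : ∀ v : K → ℝ, ∑ j, lam j * (∑ k, e j k * v k)^2 ≤ ∑ k, B k * (v k)^2)
    (ψ : K → ℝ) (a : J → ℝ) (ha : ∀ j, a j = ∑ k, e j k * ψ k)
    (t : ℝ) (ht : 0 ≤ t) :
    ∑ k, (ψ k)^2 / (B k + t) ≤ ∑ j, (a j)^2 / (lam j + t) := by
  set w : K → ℝ := fun k => ψ k / (B k + t) with hw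
  set wt : J → ℝ := fun j => ∑ k, e j k * w k with hwt
  have hBt : ∀ k, 0 < B k + t := fun k => by have := hB k; linarith
  have hlt : ∀ j, 0 < lam j + t := fun j => by have := hlam j; linarith
  have key1 : ∀ j, 2 * (a j) * wt j - (lam j + t) * (wt j)^2 ≤ (a j)^2 / (lam j + t) := by
    intro j
    rw [le_div_iff₀ (hlt j)]
    nlinarith [sq_nonneg (a j - (lam j + t) * wt j), (hlt j)]
  calc ∑ k, (ψ k)^2 / (B k + t)
      = ∑ k, (2 * (ψ k * w k) - (B k + t) * (w k)^2) := by
        apply Finset.sum_congr rfl; intro k _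
        have h := (hBt k).ne'
        simp only [hw]
        field_simp
        ring
    _ ≤ ∑ j, (2 * (a j) * wt j - (lam j + t) * (wt j)^2) := by
        have e1 : ∑ j, (2 * (a j) * wt j - (lam j + t) * (wt j)^2)
            = 2 * (∑ j, a j * wt j) - (∑ j, lam j * (wt j)^2) - t * (∑ j, (wt j)^2) := by
          rw [Finset.mul_sum, Finset.mul_sum, ← Finset.sum_sub_distrib, ← Finset.sum_sub_distrib]
          apply Finset.sum_congr rfl; intro j _; ring
        have e2 : ∑ j, a j * wt j = ∑ k, ψ k * w k := by
          simp_rw [ha, hwt]; exact bil e hcomp ψ w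
        have e3 : ∑ j, (wt j)^2 = ∑ k, (w k)^2 := by
          simp_rw [hwt, sq]; exact bil e hcomp w w
        have e4 : ∑ j, lam j * (wt j)^2 ≤ ∑ k, B k * (w k)^2 := H w
        rw [e1, e2, e3]
        have : ∑ k, (2 * (ψ k * w k) - (B k + t) * (w k)^2)
            = 2 * (∑ k, ψ k * w k) - (∑ k, B k * (w k)^2) - t * (∑ k, (w k)^2) := by
          rw [Finset.mul_sum, Finset.mul_sum, ← Finset.sum_sub_distrib, ← Finset.sum_sub_distrib]
          apply Finset.sum_congr rfl; intro k _; ring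
        rw [this]
        linarith
    _ ≤ ∑ j, (a j)^2 / (lam j + t) := Finset.sum_le_sum fun j _ => key1 j

open intervalIntegral in
lemma omlog {J K : Type} [Fintype J] [Fintype K] [DecidableEq K] (e : J → K → ℝ)
    (hcomp : ∀ k l, ∑ j, e j k * e j l = if k = l then (1:ℝ) else 0)
    (lam : J → ℝ) (hlam : ∀ j, 0 < lam j)
    (B : K → ℝ) (hB : ∀ k, 0 < B k)
    (H : ∀ v : K → ℝ, ∑ j, lam j * (∑ k, e j k * v k)^2 ≤ ∑ k, B k * (v k)^2)
    (ψ : K → ℝ) (a : J → ℝ) (ha : ∀ j, a j = ∑ k, e j k * ψ k) :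
    ∑ j, (a j)^2 * Real.log (lam j) ≤ ∑ k, (ψ k)^2 * Real.log (B k) := by
  have pointG : ∀ t : ℝ, 0 ≤ t →
      ∑ k, (ψ k)^2 / (B k + t) ≤ ∑ j, (a j)^2 / (lam j + t) :=
    fun t ht => pointG e hcomp lam hlam B hB H ψ a ha t ht
  set g : ℝ → ℝ := fun t => (∑ j, (a j)^2 * Real.log (lam j + t)) - ∑ k, (ψ k)^2 * Real.log (B k + t) with hgdef
  set G : ℝ → ℝ := fun t => (∑ j, (a j)^2 / (lam j + t)) - ∑ k, (ψ k)^2 / (B k + t) with hGdef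
  -- derivative
  have hderiv : ∀ t : ℝ, 0 ≤ t → HasDerivAt g (G t) t := by
    intro t ht
    apply HasDerivAt.sub
    · apply HasDerivAt.fun_sum
      intro j _
      have h1 : HasDerivAt (fun t : ℝ => lam j + t) 1 t := (hasDerivAt_id t).const_add _
      have h2 : HasDerivAt (fun t : ℝ => Real.log (lam j + t)) (1 / (lam j + t)) t := by
        have := (Real.hasDerivAt_log (by have := hlam j; positivity : lam j + t ≠ 0)).comp t h1
        simpa [Function.comp_def] using this
      simpa [div_eq_mul_inv, mul_comm, mul_assoc] using h2.const_mul ((a j)^2)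
    · apply HasDerivAt.fun_sum
      intro k _
      have h1 : HasDerivAt (fun t : ℝ => B k + t) 1 t := (hasDerivAt_id t).const_add _
      have h2 : HasDerivAt (fun t : ℝ => Real.log (B k + t)) (1 / (B k + t)) t := by
        have := (Real.hasDerivAt_log (by have := hB k; positivity : B k + t ≠ 0)).comp t h1
        simpa [Function.comp_def] using this
      simpa [div_eq_mul_inv, mul_comm, mul_assoc] using h2.const_mul ((ψ k)^2)
  -- FTC on [0,T]
  have key : ∀ T : ℝ, 0 ≤ T → g 0 ≤ g T := by
    intro T hT
    rcases eq_or_lt_of_le hT with h | hT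
    · rw [← h]
    have hGcont : ContinuousOn G (Set.Icc 0 T) := by
      apply ContinuousOn.sub
      · apply continuousOn_finset_sum
        intro j _
        apply ContinuousOn.div continuousOn_const (by fun_prop)
        intro t htm
        have := hlam j
        have : (0:ℝ) < lam j + t := by have := htm.1; linarith
        exact this.ne'
      · apply continuousOn_finset_sum
        intro k _
        apply ContinuousOn.div continuousOn_const (by fun_prop)
        intro t htm
        have := hB k
        have : (0:ℝ) < B k + t := by have := htm.1; linarith
        exact this.ne'
    have hint : IntervalIntegrable G MeasureTheory.volume 0 T := by
      apply ContinuousOn.intervalIntegrable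
      rwa [Set.uIcc_of_le hT.le]
    have hftc : ∫ t in (0:ℝ)..T, G t = g T - g 0 := by
      apply integral_eq_sub_of_hasDerivAt
      · intro t htm
        rw [Set.uIcc_of_le hT.le] at htm
        exact hderiv t htm.1
      · exact hint
    have hnn : 0 ≤ ∫ t in (0:ℝ)..T, G t := by
      apply intervalIntegral.integral_nonneg hT.le
      intro t htm
      have := pointG t htm.1
      simp only [hGdef]
      linarith
    linarith [hftc ▸ hnn]
  -- limit at infinity
  have hpars : ∑ j, (a j)^2 = ∑ k, (ψ k)^2 := by
    simp_rw [ha, sq]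
    exact bil e hcomp ψ ψ
  set g2 : ℝ → ℝ := fun t => (∑ j, (a j)^2 * Real.log ((lam j + t)/(1 + t)))
      - ∑ k, (ψ k)^2 * Real.log ((B k + t)/(1 + t)) with hg2def
  have hg2 : ∀ᶠ t in Filter.atTop, g2 t = g t := by
    filter_upwards [Filter.eventually_ge_atTop (0:ℝ)] with t ht
    have h1t : (0:ℝ) < 1 + t := by linarith
    have e1 : ∀ (c : ℝ), 0 < c → Real.log ((c + t)/(1+t)) = Real.log (c + t) - Real.log (1 + t) := by
      intro c hc
      rw [Real.log_div (by positivity) h1t.ne']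
    have eJ : ∑ j, (a j)^2 * Real.log ((lam j + t)/(1 + t))
        = ∑ j, (a j)^2 * (Real.log (lam j + t) - Real.log (1 + t)) :=
      Finset.sum_congr rfl fun j _ => by rw [e1 _ (hlam j)]
    have eK : ∑ k, (ψ k)^2 * Real.log ((B k + t)/(1 + t))
        = ∑ k, (ψ k)^2 * (Real.log (B k + t) - Real.log (1 + t)) :=
      Finset.sum_congr rfl fun k _ => by rw [e1 _ (hB k)]
    simp only [hg2def, hgdef, eJ, eK, mul_sub]
    rw [Finset.sum_sub_distrib, Finset.sum_sub_distrib, ← Finset.sum_mul, ← Finset.sum_mul, hpars]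
    ring
  have hterm : ∀ c : ℝ, 0 < c →
      Filter.Tendsto (fun t : ℝ => Real.log ((c + t)/(1 + t))) Filter.atTop (nhds 0) := by
    intro c hc
    have hq : Filter.Tendsto (fun t : ℝ => (c + t)/(1 + t)) Filter.atTop (nhds 1) := by
      have heq : (fun t : ℝ => 1 + (c - 1)/(1 + t)) =ᶠ[Filter.atTop] fun t => (c + t)/(1 + t) := by
        filter_upwards [Filter.eventually_ge_atTop (0:ℝ)] with t ht
        have h1t : (0:ℝ) < 1 + t := by linarith
        field_simp
        ring
      have h2 : Filter.Tendsto (fun t : ℝ => 1 + (c - 1)/(1 + t)) Filter.atTop (nhds (1 + 0)) := by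
        apply Filter.Tendsto.const_add
        apply Filter.Tendsto.div_atTop tendsto_const_nhds
        exact Filter.tendsto_atTop_add_const_left _ _ Filter.tendsto_id
      rw [add_zero] at h2
      exact h2.congr' heq
    have := (Real.continuousAt_log (one_ne_zero)).tendsto.comp hq
    simpa [Function.comp_def] using this
  have hglim : Filter.Tendsto g Filter.atTop (nhds 0) := by
    apply Filter.Tendsto.congr' hg2
    have hJ : Filter.Tendsto (fun t => ∑ j, (a j)^2 * Real.log ((lam j + t)/(1 + t)))
        Filter.atTop (nhds 0) := by
      have : Filter.Tendsto (fun t => ∑ j, (a j)^2 * Real.log ((lam j + t)/(1 + t)))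
          Filter.atTop (nhds (∑ j : J, 0)) := by
        apply tendsto_finset_sum
        intro j _
        simpa using (hterm (lam j) (hlam j)).const_mul ((a j)^2)
      simpa using this
    have hK : Filter.Tendsto (fun t => ∑ k, (ψ k)^2 * Real.log ((B k + t)/(1 + t)))
        Filter.atTop (nhds 0) := by
      have : Filter.Tendsto (fun t => ∑ k, (ψ k)^2 * Real.log ((B k + t)/(1 + t)))
          Filter.atTop (nhds (∑ k : K, 0)) := by
        apply tendsto_finset_sum
        intro k _
        simpa using (hterm (B k) (hB k)).const_mul ((ψ k)^2)
      simpa using this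
    simpa [hg2def] using hJ.sub hK
  have hfin : g 0 ≤ 0 := by
    apply ge_of_tendsto hglim
    filter_upwards [Filter.eventually_ge_atTop (0:ℝ)] with T hT
    exact key T hT
  simp only [hgdef, add_zero] at hfin
  linarith

lemma dsum {K : Type} [Fintype K] (c : ℝ) (P Q : K → ℝ) :
    ∑ k, ∑ l, c * (P k * Q l) = c * ((∑ k, P k) * (∑ l, Q l)) := by
  rw [Finset.sum_mul_sum, Finset.mul_sum]
  exact Finset.sum_congr rfl fun k _ => by rw [Finset.mul_sum]

lemma tswap {I K : Type} [Fintype I] [Fintype K] (f : I → ℝ) (P Q : I → K → ℝ) :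
    ∑ k, ∑ l, ∑ i, f i * (P i k * Q i l) = ∑ i, f i * ((∑ k, P i k) * (∑ l, Q i l)) := by
  have h1 : ∑ k, ∑ l, ∑ i, f i * (P i k * Q i l) = ∑ i, ∑ k, ∑ l, f i * (P i k * Q i l) :=
    (Finset.sum_congr rfl fun k _ => Finset.sum_comm).trans Finset.sum_comm
  rw [h1]
  exact Finset.sum_congr rfl fun i _ => dsum (f i) (P i) (Q i)

lemma crux {J K : Type} [Fintype J] [Fintype K] [DecidableEq K]
    (e : J → K → ℝ)
    (hcomp : ∀ k l, ∑ j, e j k * e j l = if k = l then (1:ℝ) else 0)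
    (lam : J → ℝ) (hlam : ∀ j, 0 ≤ lam j)
    (f : K → ℝ) (hf0 : ∀ k, 0 ≤ f k) (hf1 : ∑ k, f k = 1)
    (q : K → ℝ) (hq : ∀ k, q k = ∑ j, lam j * (e j k)^2)
    (hqf : ∀ k, 0 < f k → 0 < q k)
    (a : J → ℝ) (ha : ∀ j, a j = ∑ k, e j k * Real.sqrt (f k))
    (hker : ∀ j, lam j = 0 → a j = 0) :
    ∑ k, (f k * Real.log (f k) - f k * Real.log (q k))
      ≤ - ∑ j, (a j)^2 * Real.log (lam j) := by
  classical
  have hq0 : ∀ k, 0 ≤ q k := by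
    intro k; rw [hq]
    exact Finset.sum_nonneg fun j _ => mul_nonneg (hlam j) (sq_nonneg _)
  set N : ℝ := (Fintype.card K : ℝ) with hN
  -- main step: for every δ > 0
  have main : ∀ δ : ℝ, 0 < δ →
      ∑ j, (a j)^2 * Real.log (lam j) ≤ ∑ k, f k * Real.log ((1+δ) * (q k / f k) + δ) := by
    intro δ hδ
    set lam' : J → ℝ := fun j => if lam j = 0 then δ else lam j with hlam'def
    have hlam' : ∀ j, 0 < lam' j := by
      intro j; simp only [hlam'def]
      split
      · exact hδ
      · exact lt_of_le_of_ne (hlam j) (Ne.symm (by assumption))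
    set B : K → ℝ := fun k => (if 0 < f k then (1+δ) * (q k / f k) else (1+1/δ) * N * q k) + δ
      with hBdef
    have hB : ∀ k, 0 < B k := by
      intro k; simp only [hBdef]
      split
      · have hfk : 0 < f k := by assumption
        have := hqf k hfk
        positivity
      · have : 0 ≤ (1+1/δ) * N * q k := by
          apply mul_nonneg (mul_nonneg _ _) (hq0 k)
          · positivity
          · simp [hN]
        linarith
    -- quadratic form hypothesis
    have H : ∀ v : K → ℝ, ∑ j, lam' j * (∑ k, e j k * v k)^2 ≤ ∑ k, B k * (v k)^2 := by
      intro v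
      set vt : J → ℝ := fun j => ∑ k, e j k * v k with hvt
      set S : Finset K := Finset.univ.filter (fun k => 0 < f k) with hS
      set x : J → ℝ := fun j => ∑ k ∈ S, e j k * v k with hx
      set y : J → ℝ := fun j => ∑ k ∈ Sᶜ, e j k * v k with hy
      have hxy : ∀ j, vt j = x j + y j := by
        intro j
        simp only [hvt, hx, hy, hS]
        rw [← Finset.sum_filter_add_sum_filter_not Finset.univ (fun k => 0 < f k)]
        rw [Finset.compl_filter]
      -- parseval
      have hpars : ∑ j, (vt j)^2 = ∑ k, (v k)^2 := by
        simp_rw [hvt, sq]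
        exact bil e hcomp v v
      have step1 : ∑ j, lam' j * (vt j)^2 ≤ ∑ j, lam j * (vt j)^2 + δ * ∑ j, (vt j)^2 := by
        rw [Finset.mul_sum, ← Finset.sum_add_distrib]
        apply Finset.sum_le_sum
        intro j _
        have h1 : lam' j ≤ lam j + δ := by
          simp only [hlam'def]; split
          · simp [*]
          · linarith
        nlinarith [sq_nonneg (vt j)]
      have split1 : ∀ j, (vt j)^2 ≤ (1+δ) * (x j)^2 + (1+1/δ) * (y j)^2 := by
        intro j
        rw [hxy j]
        have key : (1+δ)*(x j)^2 + (1+1/δ)*(y j)^2 - (x j + y j)^2 = (δ*(x j) - y j)^2 / δ := by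
          field_simp
          ring
        linarith [div_nonneg (sq_nonneg (δ*(x j) - y j)) hδ.le]
      have CS1 : ∀ j, (x j)^2 ≤ ∑ k ∈ S, (e j k)^2 * (v k)^2 / f k := by
        intro j
        have hcs := Finset.sum_mul_sq_le_sq_mul_sq S (fun k => Real.sqrt (f k))
          (fun k => e j k * v k / Real.sqrt (f k))
        have hfS : ∀ k ∈ S, 0 < f k := by
          intro k hk; simp only [hS, Finset.mem_filter] at hk; exact hk.2
        have e1 : ∀ k ∈ S, Real.sqrt (f k) * (e j k * v k / Real.sqrt (f k)) = e j k * v k := by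
          intro k hk
          have : Real.sqrt (f k) ≠ 0 := Real.sqrt_ne_zero'.2 (hfS k hk)
          field_simp
        have e2 : ∀ k ∈ S, (Real.sqrt (f k))^2 = f k := fun k hk => Real.sq_sqrt (hf0 k)
        have e3 : ∀ k ∈ S, (e j k * v k / Real.sqrt (f k))^2 = (e j k)^2 * (v k)^2 / f k := by
          intro k hk
          rw [div_pow, mul_pow, Real.sq_sqrt (hf0 k)]
        rw [Finset.sum_congr rfl e1, Finset.sum_congr rfl e2, Finset.sum_congr rfl e3] at hcs
        have hsum1 : ∑ k ∈ S, f k ≤ 1 := by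
          rw [← hf1]
          exact Finset.sum_le_univ_sum_of_nonneg hf0
        calc (x j)^2 ≤ (∑ k ∈ S, f k) * ∑ k ∈ S, (e j k)^2 * (v k)^2 / f k := hcs
          _ ≤ 1 * ∑ k ∈ S, (e j k)^2 * (v k)^2 / f k := by
              apply mul_le_mul_of_nonneg_right hsum1
              apply Finset.sum_nonneg
              intro k hk
              have := hfS k hk
              positivity
          _ = _ := one_mul _
      have CS2 : ∀ j, (y j)^2 ≤ N * ∑ k ∈ Sᶜ, (e j k)^2 * (v k)^2 := by
        intro j
        have hcs := sq_sum_le_card_mul_sum_sq (s := Sᶜ) (f := fun k => e j k * v k)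
        have e4 : ∑ k ∈ Sᶜ, (e j k * v k)^2 = ∑ k ∈ Sᶜ, (e j k)^2 * (v k)^2 :=
          Finset.sum_congr rfl fun k _ => by ring
        calc (y j)^2 ≤ (Sᶜ.card : ℝ) * ∑ k ∈ Sᶜ, (e j k * v k)^2 := by exact_mod_cast hcs
          _ = (Sᶜ.card : ℝ) * ∑ k ∈ Sᶜ, (e j k)^2 * (v k)^2 := by rw [e4]
          _ ≤ N * ∑ k ∈ Sᶜ, (e j k)^2 * (v k)^2 := by
              apply mul_le_mul_of_nonneg_right
              · simp only [hN]
                exact_mod_cast Finset.card_le_univ _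
              · apply Finset.sum_nonneg; intro k _; positivity
      -- combine
      have swap1 : ∑ j, lam j * ∑ k ∈ S, (e j k)^2 * (v k)^2 / f k
          = ∑ k ∈ S, (q k / f k) * (v k)^2 := by
        simp_rw [Finset.mul_sum]
        rw [Finset.sum_comm]
        apply Finset.sum_congr rfl
        intro k _
        have : ∑ j, lam j * ((e j k)^2 * (v k)^2 / f k)
            = (∑ j, lam j * (e j k)^2) * ((v k)^2 / f k) := by
          rw [Finset.sum_mul]
          exact Finset.sum_congr rfl fun j _ => by ring
        rw [this, ← hq]
        ring
      have swap2 : ∑ j, lam j * ∑ k ∈ Sᶜ, (e j k)^2 * (v k)^2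
          = ∑ k ∈ Sᶜ, q k * (v k)^2 := by
        simp_rw [Finset.mul_sum]
        rw [Finset.sum_comm]
        apply Finset.sum_congr rfl
        intro k _
        have : ∑ j, lam j * ((e j k)^2 * (v k)^2)
            = (∑ j, lam j * (e j k)^2) * (v k)^2 := by
          rw [Finset.sum_mul]
          exact Finset.sum_congr rfl fun j _ => by ring
        rw [this, ← hq]
      have main2 : ∑ j, lam j * (vt j)^2
          ≤ (1+δ) * ∑ k ∈ S, (q k / f k) * (v k)^2 + (1+1/δ) * N * ∑ k ∈ Sᶜ, q k * (v k)^2 := by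
        calc ∑ j, lam j * (vt j)^2
            ≤ ∑ j, lam j * ((1+δ) * (x j)^2 + (1+1/δ) * (y j)^2) := by
              apply Finset.sum_le_sum
              intro j _
              exact mul_le_mul_of_nonneg_left (split1 j) (hlam j)
          _ ≤ ∑ j, ((1+δ) * (lam j * ∑ k ∈ S, (e j k)^2 * (v k)^2 / f k)
                + (1+1/δ) * (lam j * (N * ∑ k ∈ Sᶜ, (e j k)^2 * (v k)^2))) := by
              apply Finset.sum_le_sum
              intro j _
              have h1 : lam j * (x j)^2 ≤ lam j * ∑ k ∈ S, (e j k)^2 * (v k)^2 / f k :=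
                mul_le_mul_of_nonneg_left (CS1 j) (hlam j)
              have h2 : lam j * (y j)^2 ≤ lam j * (N * ∑ k ∈ Sᶜ, (e j k)^2 * (v k)^2) :=
                mul_le_mul_of_nonneg_left (CS2 j) (hlam j)
              have hδ1 : (0:ℝ) ≤ 1 + δ := by linarith
              have hδ2 : (0:ℝ) ≤ 1 + 1/δ := by positivity
              have g1 := mul_le_mul_of_nonneg_left h1 hδ1
              have g2 := mul_le_mul_of_nonneg_left h2 hδ2
              nlinarith [g1, g2]
          _ = (1+δ) * ∑ j, (lam j * ∑ k ∈ S, (e j k)^2 * (v k)^2 / f k)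
              + (1+1/δ) * N * ∑ j, (lam j * ∑ k ∈ Sᶜ, (e j k)^2 * (v k)^2) := by
              rw [Finset.mul_sum, Finset.mul_sum, ← Finset.sum_add_distrib]
              exact Finset.sum_congr rfl fun j _ => by ring
          _ = (1+δ) * ∑ k ∈ S, (q k / f k) * (v k)^2 + (1+1/δ) * N * ∑ k ∈ Sᶜ, q k * (v k)^2 := by
              rw [swap1, swap2]
      -- RHS decomposition
      have hRHS : ∑ k, B k * (v k)^2
          = ∑ k ∈ S, ((1+δ) * (q k / f k)) * (v k)^2
            + ∑ k ∈ Sᶜ, ((1+1/δ) * N * q k) * (v k)^2 + δ * ∑ k, (v k)^2 := by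
        have : ∀ k, B k * (v k)^2
            = (if 0 < f k then (1+δ) * (q k / f k) else (1+1/δ) * N * q k) * (v k)^2
              + δ * (v k)^2 := by
          intro k; simp only [hBdef]; ring
        rw [Finset.sum_congr rfl (fun k _ => this k), Finset.sum_add_distrib, ← Finset.mul_sum]
        congr 1
        rw [← Finset.sum_filter_add_sum_filter_not Finset.univ (fun k => 0 < f k), ← hS,
          Finset.compl_filter]
        congr 1
        · exact Finset.sum_congr rfl fun k hk => by
            rw [if_pos]; simp only [hS, Finset.mem_filter] at hk; exact hk.2
        · exact Finset.sum_congr rfl fun k hk => by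
            rw [if_neg]; simp only [Finset.mem_filter] at hk; exact hk.2
      rw [hRHS]
      calc ∑ j, lam' j * (vt j)^2
          ≤ ∑ j, lam j * (vt j)^2 + δ * ∑ j, (vt j)^2 := step1
        _ ≤ ((1+δ) * ∑ k ∈ S, (q k / f k) * (v k)^2 + (1+1/δ) * N * ∑ k ∈ Sᶜ, q k * (v k)^2)
            + δ * ∑ k, (v k)^2 := by
            rw [hpars]
            linarith [main2]
        _ = ∑ k ∈ S, ((1+δ) * (q k / f k)) * (v k)^2
            + ∑ k ∈ Sᶜ, ((1+1/δ) * N * q k) * (v k)^2 + δ * ∑ k, (v k)^2 := by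
            rw [Finset.mul_sum, Finset.mul_sum]
            congr 1
            congr 1
            · exact Finset.sum_congr rfl fun k _ => by ring
            · exact Finset.sum_congr rfl fun k _ => by ring
    -- apply omlog
    have hom := omlog e hcomp lam' hlam' B hB H (fun k => Real.sqrt (f k)) a ha
    have hLHS : ∑ j, (a j)^2 * Real.log (lam' j) = ∑ j, (a j)^2 * Real.log (lam j) := by
      apply Finset.sum_congr rfl
      intro j _
      by_cases hj : lam j = 0
      · rw [hker j hj]
        simp
      · simp only [hlam'def, if_neg hj]
    have hRHS2 : ∑ k, (Real.sqrt (f k))^2 * Real.log (B k)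
        = ∑ k, f k * Real.log ((1+δ) * (q k / f k) + δ) := by
      apply Finset.sum_congr rfl
      intro k _
      rw [Real.sq_sqrt (hf0 k)]
      by_cases hk : 0 < f k
      · simp only [hBdef, if_pos hk]
      · have : f k = 0 := le_antisymm (not_lt.1 hk) (hf0 k)
        rw [this]
        simp
    rw [hLHS, hRHS2] at hom
    exact hom
  -- limit δ → 0⁺
  have hlim : Filter.Tendsto (fun δ : ℝ => ∑ k, f k * Real.log ((1+δ) * (q k / f k) + δ))
      (nhdsWithin 0 (Set.Ioi 0)) (nhds (∑ k, f k * (Real.log (q k) - Real.log (f k)))) := by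
    apply tendsto_finset_sum
    intro k _
    by_cases hk : 0 < f k
    · have hqk := hqf k hk
      have hc : q k / f k ≠ 0 := by positivity
      have hcont : ContinuousAt (fun δ : ℝ => f k * Real.log ((1+δ) * (q k / f k) + δ)) 0 := by
        apply ContinuousAt.mul continuousAt_const
        have h1 : ContinuousAt (fun δ : ℝ => (1+δ) * (q k / f k) + δ) 0 := by fun_prop
        have h2 : ContinuousAt Real.log ((fun δ : ℝ => (1+δ) * (q k / f k) + δ) 0) := by
          apply Real.continuousAt_log
          simpa using hc
        have h3 : ContinuousAt (Real.log ∘ (fun δ : ℝ => (1+δ) * (q k / f k) + δ)) 0 :=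
          ContinuousAt.comp h2 h1
        simpa [Function.comp_def] using h3
      have hval : f k * Real.log ((1+(0:ℝ)) * (q k / f k) + 0) = f k * (Real.log (q k) - Real.log (f k)) := by
        rw [← Real.log_div hqk.ne' hk.ne']
        norm_num
      have := hcont.tendsto
      rw [hval] at this
      exact this.mono_left nhdsWithin_le_nhds
    · have : f k = 0 := le_antisymm (not_lt.1 hk) (hf0 k)
      simp only [this, zero_mul]
      exact tendsto_const_nhds
  have hle : ∑ j, (a j)^2 * Real.log (lam j) ≤ ∑ k, f k * (Real.log (q k) - Real.log (f k)) := by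
    apply ge_of_tendsto hlim
    filter_upwards [self_mem_nhdsWithin] with δ hδ
    exact main δ hδ
  have hrw : ∑ k, f k * (Real.log (q k) - Real.log (f k))
      = - ∑ k, (f k * Real.log (f k) - f k * Real.log (q k)) := by
    rw [← Finset.sum_neg_distrib]
    exact Finset.sum_congr rfl fun k _ => by ring
  linarith [hrw ▸ hle]

/-- `H_Hud[μ,F] ≤ S_q(ρ_Mak[μ,F])`. -/
theorem stmt17 {X K : Type} [Fintype X] [Fintype K] [DecidableEq K]
    (μ : X → ℝ) (hμ0 : ∀ x, 0 ≤ μ x) (hμ1 : ∑ x, μ x = 1)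
    (F : K → X → ℝ) (hF0 : ∀ k x, 0 ≤ F k x) (hF1 : ∀ x, ∑ k, F k x = 1)
    (ρ : Matrix K K ℝ)
    (hρ : ∀ k l, ρ k l = ∑ x, μ x * Real.sqrt (F k x * F l x))
    (hherm : ρ.IsHermitian) :
    shannon (fun k => ∑ x, μ x * F k x) -
        (∑ x, μ x * shannon (fun k => F k x)) ≤
      vonNeumannR hherm := by
  classical
  set lam : K → ℝ := hherm.eigenvalues with hlamdef
  set e : K → K → ℝ := fun j k => hherm.eigenvectorUnitary k j with hedef
  -- spectral theorem entrywise
  have spec : ∀ k l, ρ k l = ∑ j, lam j * (e j k * e j l) := by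
    intro k l
    conv_lhs => rw [hherm.spectral_theorem, Unitary.conjStarAlgAut_apply]
    rw [Matrix.mul_apply]
    simp only [Matrix.mul_apply, Matrix.diagonal_apply]
    apply Finset.sum_congr rfl
    intro j _
    simp only [mul_ite, mul_zero, ite_mul, zero_mul, Finset.sum_ite_eq', Finset.mem_univ, if_true,
      Matrix.star_apply, Function.comp_apply, RCLike.ofReal_real_eq_id, id_eq, star_trivial]
    ring
  have hcomp : ∀ k l, ∑ j, e j k * e j l = if k = l then (1:ℝ) else 0 := by
    intro k l
    have h := (Matrix.mem_unitaryGroup_iff).mp (hherm.eigenvectorUnitary).2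
    have h2 := congrFun (congrFun (congrArg (fun M : Matrix K K ℝ => M) h) k) l
    simp only [Matrix.mul_apply, Matrix.one_apply, Matrix.conjTranspose_apply, Matrix.star_apply,
      star_trivial] at h2
    exact h2
  have hortho : ∀ i j, ∑ k, e i k * e j k = if i = j then (1:ℝ) else 0 := by
    intro i j
    have h := (Matrix.mem_unitaryGroup_iff').mp (hherm.eigenvectorUnitary).2
    have h2 := congrFun (congrFun (congrArg (fun M : Matrix K K ℝ => M) h) i) j
    simp only [Matrix.mul_apply, Matrix.one_apply, Matrix.conjTranspose_apply, Matrix.star_apply,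
      star_trivial] at h2
    rw [← h2]
  set a : X → K → ℝ := fun x j => ∑ k, e j k * Real.sqrt (F k x) with hadef
  -- lam j = ∑ x μ x (a x j)^2
  have hlamrep : ∀ j, ∑ x, μ x * (a x j)^2 = lam j := by
    intro j
    have way1 : ∑ k, ∑ l, (e j k * e j l) * ρ k l = ∑ x, μ x * (a x j)^2 := by
      have e1 : ∀ k l, (e j k * e j l) * ρ k l
          = ∑ x, μ x * ((e j k * Real.sqrt (F k x)) * (e j l * Real.sqrt (F l x))) := by
        intro k l
        rw [hρ k l, Finset.mul_sum]
        apply Finset.sum_congr rfl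
        intro x _
        rw [Real.sqrt_mul (hF0 k x)]
        ring
      calc ∑ k, ∑ l, (e j k * e j l) * ρ k l
          = ∑ k, ∑ l, ∑ x, μ x * ((e j k * Real.sqrt (F k x)) * (e j l * Real.sqrt (F l x))) := by
            exact Finset.sum_congr rfl fun k _ => Finset.sum_congr rfl fun l _ => e1 k l
        _ = ∑ x, μ x * ((∑ k, e j k * Real.sqrt (F k x)) * (∑ l, e j l * Real.sqrt (F l x))) :=
            tswap μ (fun x k => e j k * Real.sqrt (F k x)) (fun x l => e j l * Real.sqrt (F l x))
        _ = ∑ x, μ x * (a x j)^2 := by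
            apply Finset.sum_congr rfl
            intro x _
            rw [hadef, sq]
    have way2 : ∑ k, ∑ l, (e j k * e j l) * ρ k l = lam j := by
      have e2 : ∀ k l, (e j k * e j l) * ρ k l = ∑ i, lam i * ((e j k * e i k) * (e j l * e i l)) := by
        intro k l
        rw [spec k l, Finset.mul_sum]
        exact Finset.sum_congr rfl fun i _ => by ring
      calc ∑ k, ∑ l, (e j k * e j l) * ρ k l
          = ∑ k, ∑ l, ∑ i, lam i * ((e j k * e i k) * (e j l * e i l)) := by
            exact Finset.sum_congr rfl fun k _ => Finset.sum_congr rfl fun l _ => e2 k l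
        _ = ∑ i, lam i * ((∑ k, e j k * e i k) * (∑ l, e j l * e i l)) :=
            tswap lam (fun i k => e j k * e i k) (fun i l => e j l * e i l)
        _ = lam j := by
            have : ∀ i, lam i * ((∑ k, e j k * e i k) * (∑ l, e j l * e i l))
                = lam i * ((if j = i then (1:ℝ) else 0) * (if j = i then (1:ℝ) else 0)) := by
              intro i
              rw [hortho j i]
            rw [Finset.sum_congr rfl fun i _ => this i]
            simp [Finset.sum_ite_eq]
    rw [← way1, way2]
  have hlam0 : ∀ j, 0 ≤ lam j := fun j => by
    rw [← hlamrep j]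
    exact Finset.sum_nonneg fun x _ => mul_nonneg (hμ0 x) (sq_nonneg _)
  set q : K → ℝ := fun k => ∑ x, μ x * F k x with hqdef
  have hqspec : ∀ k, q k = ∑ j, lam j * (e j k)^2 := by
    intro k
    have h1 : ρ k k = q k := by
      rw [hρ k k, hqdef]
      exact Finset.sum_congr rfl fun x _ => by rw [Real.sqrt_mul_self (hF0 k x)]
    rw [← h1, spec k k]
    exact Finset.sum_congr rfl fun j _ => by rw [sq]
  -- per-x inequality from crux
  have perx : ∀ x, μ x * (∑ k, (F k x * Real.log (F k x) - F k x * Real.log (q k)))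
      ≤ μ x * (- ∑ j, (a x j)^2 * Real.log (lam j)) := by
    intro x
    rcases eq_or_lt_of_le (hμ0 x) with h | h
    · rw [← h]
      simp
    · apply mul_le_mul_of_nonneg_left _ (hμ0 x)
      apply crux e hcomp lam hlam0 (fun k => F k x) (fun k => hF0 k x) (hF1 x) q hqspec
      · intro k hk
        have h1 : μ x * F k x ≤ q k := by
          rw [hqdef]
          exact Finset.single_le_sum (f := fun x' => μ x' * F k x')
            (fun x' _ => mul_nonneg (hμ0 x') (hF0 k x')) (Finset.mem_univ x)
        have h2 : 0 < μ x * F k x := mul_pos h hk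
        linarith
      · intro j
        rfl
      · intro j hj
        have hz : ∑ x', μ x' * (a x' j)^2 = 0 := by rw [hlamrep j, hj]
        have hz2 := (Finset.sum_eq_zero_iff_of_nonneg
          (fun x' _ => mul_nonneg (hμ0 x') (sq_nonneg (a x' j)))).mp hz x (Finset.mem_univ x)
        have h3 : (a x j)^2 = 0 := by
          rcases mul_eq_zero.mp hz2 with h4 | h4
          · exact absurd h4 h.ne'
          · exact h4
        exact pow_eq_zero_iff (n := 2) (by norm_num) |>.mp h3
  have total := Finset.sum_le_sum (s := (Finset.univ : Finset X)) (fun x _ => perx x)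
  -- identity for the right side
  have E1 : ∑ x, μ x * (- ∑ j, (a x j)^2 * Real.log (lam j)) = vonNeumannR hherm := by
    unfold vonNeumannR
    calc ∑ x, μ x * (- ∑ j, (a x j)^2 * Real.log (lam j))
        = ∑ x, ∑ j, -(μ x * (a x j)^2 * Real.log (lam j)) := by
          apply Finset.sum_congr rfl
          intro x _
          rw [mul_neg, Finset.mul_sum, ← Finset.sum_neg_distrib]
          exact Finset.sum_congr rfl fun j _ => by ring
      _ = ∑ j, ∑ x, -(μ x * (a x j)^2 * Real.log (lam j)) := Finset.sum_comm
      _ = ∑ j, eta (lam j) := by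
          apply Finset.sum_congr rfl
          intro j _
          have h1 : ∑ x, μ x * (a x j)^2 * Real.log (lam j)
              = (∑ x, μ x * (a x j)^2) * Real.log (lam j) := (Finset.sum_mul _ _ _).symm
          rw [Finset.sum_neg_distrib, h1, hlamrep j]
          rfl
  -- identity for the left side
  have E2 : ∑ x, μ x * (∑ k, (F k x * Real.log (F k x) - F k x * Real.log (q k)))
      = shannon (fun k => ∑ x, μ x * F k x) - (∑ x, μ x * shannon (fun k => F k x)) := by
    have h1 : ∀ x, μ x * (∑ k, (F k x * Real.log (F k x) - F k x * Real.log (q k)))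
        = (∑ k, μ x * (F k x * Real.log (F k x))) - ∑ k, μ x * F k x * Real.log (q k) := by
      intro x
      rw [Finset.mul_sum, ← Finset.sum_sub_distrib]
      exact Finset.sum_congr rfl fun k _ => by ring
    rw [Finset.sum_congr rfl fun x _ => h1 x, Finset.sum_sub_distrib]
    have h2 : ∑ x, ∑ k, μ x * (F k x * Real.log (F k x))
        = - ∑ x, μ x * shannon (fun k => F k x) := by
      rw [← Finset.sum_neg_distrib]
      apply Finset.sum_congr rfl
      intro x _
      have : μ x * shannon (fun k => F k x) = ∑ k, -(μ x * (F k x * Real.log (F k x))) := by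
        unfold shannon eta
        rw [Finset.mul_sum]
        exact Finset.sum_congr rfl fun k _ => by ring
      rw [this, Finset.sum_neg_distrib, neg_neg]
    have h3 : ∑ x, ∑ k, μ x * F k x * Real.log (q k)
        = - shannon (fun k => ∑ x, μ x * F k x) := by
      rw [Finset.sum_comm]
      unfold shannon eta
      rw [← Finset.sum_neg_distrib]
      apply Finset.sum_congr rfl
      intro k _
      rw [neg_neg, Finset.sum_mul]
    rw [h2, h3]
    ring
  calc shannon (fun k => ∑ x, μ x * F k x) - (∑ x, μ x * shannon (fun k => F k x))
      = ∑ x, μ x * (∑ k, (F k x * Real.log (F k x) - F k x * Real.log (q k))) := E2.symm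
    _ ≤ ∑ x, μ x * (- ∑ j, (a x j)^2 * Real.log (lam j)) := total
    _ = vonNeumannR hherm := E1
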